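/- Let κ > 0 and n be real numbers, and let α_n, β_n, γ_n, x_n be the fermionic SLE exponents. Define F(u,v) = u^{α_n} · v^{β_n} · (u−v)^{γ_n} using principal-branch complex powers, for u in the upper half-plane {z : Im z > 0} and v in the lower half-plane {z : Im z < 0} (so that u, v and u−v all avoid the nonpositive real axis and F is holomorphic in each variable separately). Then for all such (u,v): (κ/2)·[∂²F/∂u² + 2·∂²F/∂u∂v + ∂²F/∂v²] + (2/u)·∂F/∂u + (2/v)·∂F/∂v − x_n·(1/u² + 1/v²)·F − n·(1/u² − 1/v²)·F = 0. (Equivalently, Q̃(u,v,ε) = ε^{x_n} F(u,v) solves the leading-order SLE equation (κ/2)(∂_u+∂_v)²Q̃ + (2/u)∂_uQ̃ + (2/v)∂_vQ̃ − (1/u²+1/v²)ε∂_εQ̃ − n(1/u²−1/v²)Q̃ = 0.) -/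

import Mathlib

open Complex

open Complex

private lemma slit_of_im {z : ℂ} (h : z.im ≠ 0) : z ∈ slitPlane :=
  mem_slitPlane_iff.mpr (Or.inr h)

private lemma keyU (a b c : ℂ) (v : ℂ) {u : ℂ} (hu : u.im ≠ 0) (hw : (u - v).im ≠ 0) :
    HasDerivAt (fun u' => u' ^ a * v ^ b * (u' - v) ^ c)
      (a * (u ^ (a - 1) * v ^ b * (u - v) ^ c) + c * (u ^ a * v ^ b * (u - v) ^ (c - 1))) u := by
  have h1 : HasDerivAt (fun u' : ℂ => u' ^ a * v ^ b) (a * u ^ (a - 1) * v ^ b) u := by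
    simpa using ((hasDerivAt_id u).cpow_const (slit_of_im hu)).mul_const (v ^ b)
  have h2 : HasDerivAt (fun u' : ℂ => (u' - v) ^ c) (c * (u - v) ^ (c - 1)) u := by
    simpa using ((hasDerivAt_id u).sub_const v).cpow_const (slit_of_im hw)
  have h := h1.mul h2
  refine h.congr_deriv ?_
  ring

private lemma keyV (a b c : ℂ) (u : ℂ) {v : ℂ} (hv : v.im ≠ 0) (hw : (u - v).im ≠ 0) :
    HasDerivAt (fun v' => u ^ a * v' ^ b * (u - v') ^ c)
      (b * (u ^ a * v ^ (b - 1) * (u - v) ^ c) - c * (u ^ a * v ^ b * (u - v) ^ (c - 1))) v := by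
  have h1 : HasDerivAt (fun v' : ℂ => u ^ a * v' ^ b) (u ^ a * (b * v ^ (b - 1))) v := by
    simpa using ((hasDerivAt_id v).cpow_const (slit_of_im hv)).const_mul (u ^ a)
  have h2 : HasDerivAt (fun v' : ℂ => (u - v') ^ c) (-(c * (u - v) ^ (c - 1))) v := by
    simpa using ((hasDerivAt_id v).const_sub u).cpow_const (slit_of_im hw)
  have h := h1.mul h2
  refine h.congr_deriv ?_
  ring

set_option maxHeartbeats 2000000 in
/-- The fermionic power-law ansatz `F(u,v) = u^α v^β (u-v)^γ` with the fermionic SLE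
exponents solves the leading-order SLE equation, for `u` in the upper half-plane and
`v` in the lower half-plane. -/
theorem stmt0 (κ n : ℝ) (hκ : 0 < κ)
    (α β γ x : ℝ)
    (hα : α = (κ - 8) / (2 * κ) - n / 2)
    (hβ : β = (κ - 8) / (2 * κ) + n / 2)
    (hγ : γ = ((8 - κ) ^ 2 - κ ^ 2 * n ^ 2) / (8 * κ))
    (hx : x = 1 - κ / 8 + κ / 8 * n ^ 2)
    (F : ℂ → ℂ → ℂ)
    (hF : ∀ u v : ℂ, F u v = u ^ (α : ℂ) * v ^ (β : ℂ) * (u - v) ^ (γ : ℂ)) :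
    ∀ u v : ℂ, 0 < u.im → v.im < 0 →
      (κ / 2 : ℂ) *
          (deriv (fun u' => deriv (fun u'' => F u'' v) u') u
            + 2 * deriv (fun u' => deriv (fun v' => F u' v') v) u
            + deriv (fun v' => deriv (fun v'' => F u v'') v') v)
        + (2 / u) * deriv (fun u' => F u' v) u
        + (2 / v) * deriv (fun v' => F u v') v
        - (x : ℂ) * (1 / u ^ 2 + 1 / v ^ 2) * F u v
        - (n : ℂ) * (1 / u ^ 2 - 1 / v ^ 2) * F u v = 0 := by
  intro u v hu hv
  set a : ℂ := (α : ℂ) with ha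
  set b : ℂ := (β : ℂ) with hb
  set c : ℂ := (γ : ℂ) with hc
  have hFe : ∀ u' v' : ℂ, F u' v' = u' ^ a * v' ^ b * (u' - v') ^ c := hF
  have himu : u.im ≠ 0 := ne_of_gt hu
  have himv : v.im ≠ 0 := ne_of_lt hv
  have himw : (u - v).im ≠ 0 := by simp [Complex.sub_im]; linarith
  have hu0 : u ≠ 0 := fun h => himu (by simp [h])
  have hv0 : v ≠ 0 := fun h => himv (by simp [h])
  have hw0 : u - v ≠ 0 := fun h => himw (by simp [h])
  -- first derivative in u, valid for u' in the upper half-plane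
  have hderU : ∀ u' : ℂ, 0 < u'.im →
      deriv (fun u'' => F u'' v) u' =
        a * (u' ^ (a - 1) * v ^ b * (u' - v) ^ c)
          + c * (u' ^ a * v ^ b * (u' - v) ^ (c - 1)) := by
    intro u' hu'
    have himu' : u'.im ≠ 0 := ne_of_gt hu'
    have himw' : (u' - v).im ≠ 0 := by simp [Complex.sub_im]; linarith
    have : (fun u'' => F u'' v) = fun u'' => u'' ^ a * v ^ b * (u'' - v) ^ c := by
      funext z; exact hFe z v
    rw [this]
    exact (keyU a b c v himu' himw').deriv
  -- first derivative in v (with varying base point u'), valid for 0 < u'.im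
  have hderV : ∀ u' v' : ℂ, 0 < u'.im → v'.im < 0 →
      deriv (fun v'' => F u' v'') v' =
        b * (u' ^ a * v' ^ (b - 1) * (u' - v') ^ c)
          - c * (u' ^ a * v' ^ b * (u' - v') ^ (c - 1)) := by
    intro u' v' hu' hv'
    have himv' : v'.im ≠ 0 := ne_of_lt hv'
    have himw' : (u' - v').im ≠ 0 := by simp [Complex.sub_im]; linarith
    have : (fun v'' => F u' v'') = fun v'' => u' ^ a * v'' ^ b * (u' - v'') ^ c := by
      funext z; exact hFe u' z
    rw [this]
    exact (keyV a b c u' himv' himw').deriv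
  -- eventual neighborhood facts
  have hUnhds : ∀ᶠ u' in nhds u, 0 < u'.im :=
    (Complex.continuous_im.tendsto u).eventually (eventually_gt_nhds hu)
  have hVnhds : ∀ᶠ v' in nhds v, v'.im < 0 :=
    (Complex.continuous_im.tendsto v).eventually (eventually_lt_nhds hv)
  -- second derivative in u
  have hD2u : deriv (fun u' => deriv (fun u'' => F u'' v) u') u =
      a * ((a-1) * (u ^ (a-1-1) * v ^ b * (u - v) ^ c) + c * (u ^ (a-1) * v ^ b * (u - v) ^ (c-1)))
      + c * (a * (u ^ (a-1) * v ^ b * (u - v) ^ (c-1)) + (c-1) * (u ^ a * v ^ b * (u - v) ^ (c-1-1))) := by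
    have hev : (fun u' => deriv (fun u'' => F u'' v) u') =ᶠ[nhds u]
        (fun u' => a * (u' ^ (a - 1) * v ^ b * (u' - v) ^ c)
          + c * (u' ^ a * v ^ b * (u' - v) ^ (c - 1))) :=
      hUnhds.mono fun u' h => hderU u' h
    rw [hev.deriv_eq]
    exact (((keyU (a-1) b c v himu himw).const_mul a).add
      ((keyU a b (c-1) v himu himw).const_mul c)).deriv
  -- mixed second derivative
  have hD2m : deriv (fun u' => deriv (fun v' => F u' v') v) u =
      b * (a * (u ^ (a-1) * v ^ (b-1) * (u - v) ^ c) + c * (u ^ a * v ^ (b-1) * (u - v) ^ (c-1)))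
      - c * (a * (u ^ (a-1) * v ^ b * (u - v) ^ (c-1)) + (c-1) * (u ^ a * v ^ b * (u - v) ^ (c-1-1))) := by
    have hev : (fun u' => deriv (fun v' => F u' v') v) =ᶠ[nhds u]
        (fun u' => b * (u' ^ a * v ^ (b - 1) * (u' - v) ^ c)
          - c * (u' ^ a * v ^ b * (u' - v) ^ (c - 1))) :=
      hUnhds.mono fun u' h => hderV u' v h hv
    rw [hev.deriv_eq]
    exact (((keyU a (b-1) c v himu himw).const_mul b).sub
      ((keyU a b (c-1) v himu himw).const_mul c)).deriv
  -- second derivative in v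
  have hD2v : deriv (fun v' => deriv (fun v'' => F u v'') v') v =
      b * ((b-1) * (u ^ a * v ^ (b-1-1) * (u - v) ^ c) - c * (u ^ a * v ^ (b-1) * (u - v) ^ (c-1)))
      - c * (b * (u ^ a * v ^ (b-1) * (u - v) ^ (c-1)) - (c-1) * (u ^ a * v ^ b * (u - v) ^ (c-1-1))) := by
    have hev : (fun v' => deriv (fun v'' => F u v'') v') =ᶠ[nhds v]
        (fun v' => b * (u ^ a * v' ^ (b - 1) * (u - v') ^ c)
          - c * (u ^ a * v' ^ b * (u - v') ^ (c - 1))) :=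
      hVnhds.mono fun v' h => hderV u v' hu h
    rw [hev.deriv_eq]
    exact (((keyV a (b-1) c u himv himw).const_mul b).sub
      ((keyV a b (c-1) u himv himw).const_mul c)).deriv
  rw [hD2u, hD2m, hD2v, hderU u hu, hderV u v hu hv, hFe u v]
  -- rewrite all powers in terms of the lowest exponents
  have eu1 : u ^ (a - 1) = u ^ (a - 1 - 1) * u := by
    have h := cpow_add (a - 1 - 1) 1 hu0
    rw [cpow_one, show a - 1 - 1 + 1 = a - 1 from by ring] at h
    exact h
  have eu0 : u ^ a = u ^ (a - 1 - 1) * u * u := by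
    have h := cpow_add (a - 1) 1 hu0
    rw [cpow_one, show a - 1 + 1 = a from by ring, eu1] at h
    exact h
  have ev1 : v ^ (b - 1) = v ^ (b - 1 - 1) * v := by
    have h := cpow_add (b - 1 - 1) 1 hv0
    rw [cpow_one, show b - 1 - 1 + 1 = b - 1 from by ring] at h
    exact h
  have ev0 : v ^ b = v ^ (b - 1 - 1) * v * v := by
    have h := cpow_add (b - 1) 1 hv0
    rw [cpow_one, show b - 1 + 1 = b from by ring, ev1] at h
    exact h
  have ew1 : (u - v) ^ (c - 1) = (u - v) ^ (c - 1 - 1) * (u - v) := by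
    have h := cpow_add (c - 1 - 1) 1 hw0
    rw [cpow_one, show c - 1 - 1 + 1 = c - 1 from by ring] at h
    exact h
  have ew0 : (u - v) ^ c = (u - v) ^ (c - 1 - 1) * (u - v) * (u - v) := by
    have h := cpow_add (c - 1) 1 hw0
    rw [cpow_one, show c - 1 + 1 = c from by ring, ew1] at h
    exact h
  rw [eu0, eu1, ev0, ev1, ew0, ew1]
  set A := u ^ (a - 1 - 1) with hA
  set B := v ^ (b - 1 - 1) with hB
  set C := (u - v) ^ (c - 1 - 1) with hC
  have hκ0 : (κ : ℝ) ≠ 0 := hκ.ne'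
  -- scalar coefficient identities
  have r1 : κ / 2 * α * (α - 1) + 2 * α - x - n = 0 := by
    subst hα hx; field_simp; ring
  have r2 : κ / 2 * β * (β - 1) + 2 * β - x + n = 0 := by
    subst hβ hx; field_simp; ring
  have r3 : κ * α * β - 2 * γ = 0 := by
    subst hα hβ hγ; field_simp; ring
  have h1 : (κ : ℂ) / 2 * a * (a - 1) + 2 * a - (x : ℂ) - (n : ℂ) = 0 := by
    have := congrArg (fun t : ℝ => (t : ℂ)) r1
    push_cast at this
    rw [ha]; linear_combination this
  have h2 : (κ : ℂ) / 2 * b * (b - 1) + 2 * b - (x : ℂ) + (n : ℂ) = 0 := by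
    have := congrArg (fun t : ℝ => (t : ℂ)) r2
    push_cast at this
    rw [hb]; linear_combination this
  have h3 : (κ : ℂ) * a * b - 2 * c = 0 := by
    have := congrArg (fun t : ℝ => (t : ℂ)) r3
    push_cast at this
    rw [ha, hb, hc]; linear_combination this
  have hP : ((κ : ℂ) / 2 * a * (a - 1) + 2 * a - (x : ℂ) - (n : ℂ)) * v ^ 2 * (u - v) ^ 2
      + ((κ : ℂ) * a * b - 2 * c) * u * v * (u - v) ^ 2
      + ((κ : ℂ) / 2 * b * (b - 1) + 2 * b - (x : ℂ) + (n : ℂ)) * u ^ 2 * (u - v) ^ 2 = 0 := by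
    linear_combination (v ^ 2 * (u - v) ^ 2) * h1 + (u * v * (u - v) ^ 2) * h3
      + (u ^ 2 * (u - v) ^ 2) * h2
  field_simp
  linear_combination (2 * A * B * C) * hP
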